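/- Let V be a complex vector space of dimension 2m (m ≥ 1) equipped with a nondegenerate alternating bilinear form ⟨ , ⟩. Let λ be a symmetric partition contained in the m×m square (i.e., λ = λ') and let F• be an isotropic full flag (i.e., ∠(F_{2m−i}) = Fᵢ for all i). Then the Schubert variety X_λ F• is stable under the Lagrangian involution: {∠(H) | H ∈ X_λ F•} = X_λ F•. -/

import Mathlib

open Module

/-- The annihilator `∠(W) = {v ∈ V | ⟨v,w⟩ = 0 for all w ∈ W}` of a subspace `W`
with respect to a bilinear form `B`. -/
def ann {V : Type*} [AddCommGroup V] [Module ℂ V]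
    (B : LinearMap.BilinForm ℂ V) (W : Submodule ℂ V) : Submodule ℂ V :=
  W.dualAnnihilator.comap B

/-- A full flag `F₀ = 0 ⊊ F₁ ⊊ ⋯ ⊊ F_{2m} = V` with `dim Fᵢ = i`. -/
def IsFullFlag (m : ℕ) {V : Type*} [AddCommGroup V] [Module ℂ V]
    (F : Fin (2 * m + 1) → Submodule ℂ V) : Prop :=
  F 0 = ⊥ ∧ F (Fin.last (2 * m)) = ⊤ ∧ StrictMono F ∧
    ∀ i, finrank ℂ (F i) = (i : ℕ)

/-- The annihilator flag `∠(F•)`, whose `i`-th member is `∠(F_{2m-i})`. -/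
def annFlag (m : ℕ) {V : Type*} [AddCommGroup V] [Module ℂ V]
    (B : LinearMap.BilinForm ℂ V) (F : Fin (2 * m + 1) → Submodule ℂ V) :
    Fin (2 * m + 1) → Submodule ℂ V :=
  fun i => ann B (F i.rev)

/-- The conjugate partition `λ'ⱼ = #{i | λᵢ ≥ j}` of a partition contained in the
`m × m` square, where `lam i` is the `(i+1)`-st part `λ_{i+1}`. -/
def conjugatePartition (m : ℕ) (lam : Fin m → ℕ) : Fin m → ℕ :=
  fun j => (Finset.univ.filter fun i : Fin m => (j : ℕ) + 1 ≤ lam i).card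

/-- The Schubert variety
`X_λ F• = {H | dim H = m and dim (H ∩ F_{m+i-λᵢ}) ≥ i for i = 1,…,m}`. -/
def SchubertVariety (m : ℕ) {V : Type*} [AddCommGroup V] [Module ℂ V]
    (lam : Fin m → ℕ) (F : Fin (2 * m + 1) → Submodule ℂ V) :
    Set (Submodule ℂ V) :=
  {H | finrank ℂ H = m ∧ ∀ i : Fin m,
    (i : ℕ) + 1 ≤
      finrank ℂ ↥(H ⊓ F ⟨m + ((i : ℕ) + 1) - lam i, by have := i.isLt; omega⟩)}

section Aux

variable {V : Type*} [AddCommGroup V] [Module ℂ V] [FiniteDimensional ℂ V]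
  {B : LinearMap.BilinForm ℂ V}

lemma mem_ann {W : Submodule ℂ V} {v : V} :
    v ∈ ann B W ↔ ∀ w ∈ W, B v w = 0 := by
  simp [ann, Submodule.mem_comap, Submodule.mem_dualAnnihilator]

lemma finrank_ann_add (hB : B.Nondegenerate) (W : Submodule ℂ V) :
    finrank ℂ (ann B W) + finrank ℂ W = finrank ℂ V := by
  have h1 : ann B W =
      W.dualAnnihilator.comap (B.toDual hB : V →ₗ[ℂ] Module.Dual ℂ V) := by
    ext v
    simp only [ann, Submodule.mem_comap, LinearEquiv.coe_coe]
    constructor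
    · intro h; convert h using 2; ext; exact LinearMap.BilinForm.toDual_def hB
    · intro h; convert h using 2; ext; exact (LinearMap.BilinForm.toDual_def hB).symm
  have h2 : finrank ℂ (ann B W) = finrank ℂ W.dualAnnihilator := by
    rw [h1, Submodule.comap_equiv_eq_map_symm]
    exact LinearEquiv.finrank_map_eq (B.toDual hB).symm W.dualAnnihilator
  have h3 := Subspace.finrank_add_finrank_dualCoannihilator_eq W.dualAnnihilator
  rw [Subspace.dualAnnihilator_dualCoannihilator_eq] at h3
  rw [h2]
  exact h3

lemma le_ann_ann (halt : B.IsAlt) (W : Submodule ℂ V) : W ≤ ann B (ann B W) := by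
  intro w hw
  rw [mem_ann]
  intro u hu
  rw [mem_ann] at hu
  have := halt.neg_eq u w
  have h0 := hu w hw
  rw [h0] at this
  linear_combination -this

lemma ann_ann (hB : B.Nondegenerate) (halt : B.IsAlt) (W : Submodule ℂ V) :
    ann B (ann B W) = W := by
  have h1 := finrank_ann_add hB W
  have h2 := finrank_ann_add hB (ann B W)
  exact (Submodule.eq_of_le_of_finrank_le (le_ann_ann halt W) (by omega)).symm

lemma ann_sup (H W : Submodule ℂ V) :
    ann B (H ⊔ W) = ann B H ⊓ ann B W := by
  simp [ann, Submodule.dualAnnihilator_sup_eq, Submodule.comap_inf]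

lemma finrank_ann_inf_ann (hB : B.Nondegenerate) (H W : Submodule ℂ V) :
    finrank ℂ ↥(ann B H ⊓ ann B W) + finrank ℂ H + finrank ℂ W
      = finrank ℂ V + finrank ℂ ↥(H ⊓ W) := by
  rw [← ann_sup]
  have h1 := finrank_ann_add hB (H ⊔ W)
  have h2 := Submodule.finrank_sup_add_finrank_inf_eq H W
  omega

end Aux

lemma schubert_ann_mem (m : ℕ) (hm : 1 ≤ m) (V : Type*) [AddCommGroup V]
    [Module ℂ V] [FiniteDimensional ℂ V] (hdim : finrank ℂ V = 2 * m)
    (B : LinearMap.BilinForm ℂ V) (halt : B.IsAlt) (hB : B.Nondegenerate)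
    (lam : Fin m → ℕ) (hanti : Antitone lam) (hle : ∀ i, lam i ≤ m)
    (hsym : conjugatePartition m lam = lam)
    (F : Fin (2 * m + 1) → Submodule ℂ V) (hF : IsFullFlag m F)
    (hiso : annFlag m B F = F) (H : Submodule ℂ V)
    (hH : H ∈ SchubertVariety m lam F) : ann B H ∈ SchubertVariety m lam F := by
  obtain ⟨hHm, hcond⟩ := hH
  obtain ⟨-, -, hFmono, hFrank⟩ := hF
  have hannm : finrank ℂ (ann B H) = m := by
    have := finrank_ann_add hB H; omega
  refine ⟨hannm, fun i => ?_⟩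
  have hil := i.isLt
  have hlei := hle i
  -- index `k` of the flag member in the condition for `ann B H`, and dual index `k'`
  have hk1 : m + ((i : ℕ) + 1) - lam i < 2 * m + 1 := by omega
  have hk'1 : lam i + m - ((i : ℕ) + 1) < 2 * m + 1 := by omega
  -- step 1: `F ⟨k⟩ = ann B (F ⟨k'⟩)`
  have hrev : (⟨m + ((i : ℕ) + 1) - lam i, hk1⟩ : Fin (2 * m + 1)).rev
      = ⟨lam i + m - ((i : ℕ) + 1), hk'1⟩ := by
    ext
    simp only [Fin.val_rev]
    omega
  have hFk : F ⟨m + ((i : ℕ) + 1) - lam i, hk1⟩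
      = ann B (F ⟨lam i + m - ((i : ℕ) + 1), hk'1⟩) := by
    have h : ann B (F (⟨m + ((i : ℕ) + 1) - lam i, hk1⟩ : Fin (2 * m + 1)).rev)
        = F ⟨m + ((i : ℕ) + 1) - lam i, hk1⟩ :=
      congrFun hiso (⟨m + ((i : ℕ) + 1) - lam i, hk1⟩ : Fin (2 * m + 1))
    exact h.symm.trans (congrArg (fun t => ann B (F t)) hrev)
  -- step 2: key claim: `finrank (H ⊓ F ⟨k'⟩) ≥ lam i`
  have claimB : lam i ≤ finrank ℂ ↥(H ⊓ F ⟨lam i + m - ((i : ℕ) + 1), hk'1⟩) := by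
    rcases Nat.eq_zero_or_pos (lam i) with h0 | hpos
    · omega
    · have hjlt : lam i - 1 < m := by omega
      have hlamj : (i : ℕ) + 1 ≤ lam ⟨lam i - 1, hjlt⟩ := by
        have hcp : conjugatePartition m lam ⟨lam i - 1, hjlt⟩ = lam ⟨lam i - 1, hjlt⟩ :=
          congrFun hsym _
        rw [← hcp]
        unfold conjugatePartition
        have hv : ((⟨lam i - 1, hjlt⟩ : Fin m) : ℕ) + 1 = lam i := by simp; omega
        have hsub : Finset.Iic i ⊆ Finset.univ.filter
            fun t : Fin m => ((⟨lam i - 1, hjlt⟩ : Fin m) : ℕ) + 1 ≤ lam t := by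
          intro t ht
          simp only [Finset.mem_Iic] at ht
          simp only [Finset.mem_filter, Finset.mem_univ, true_and, hv]
          exact hanti ht
        have := Finset.card_le_card hsub
        rwa [Fin.card_Iic] at this
      have hjcond := hcond ⟨lam i - 1, hjlt⟩
      have hlejm := hle ⟨lam i - 1, hjlt⟩
      have hv : ((⟨lam i - 1, hjlt⟩ : Fin m) : ℕ) + 1 = lam i := by simp; omega
      have final := hjcond.trans (Submodule.finrank_mono (inf_le_inf_left H
        (hFmono.monotone (show _ ≤ (⟨lam i + m - ((i : ℕ) + 1), hk'1⟩ : Fin (2 * m + 1)) by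
          simp only [Fin.mk_le_mk, Fin.le_def, Fin.val_mk]
          omega))))
      omega
  -- step 3: rank computation
  have hrank := finrank_ann_inf_ann hB H (F ⟨lam i + m - ((i : ℕ) + 1), hk'1⟩)
  have e2 : finrank ℂ ↥(F ⟨lam i + m - ((i : ℕ) + 1), hk'1⟩)
      = lam i + m - ((i : ℕ) + 1) := hFrank _
  have e1 : finrank ℂ ↥(ann B H ⊓ F ⟨m + ((i : ℕ) + 1) - lam i, hk1⟩)
      = finrank ℂ ↥(ann B H ⊓ ann B (F ⟨lam i + m - ((i : ℕ) + 1), hk'1⟩)) := by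
    rw [hFk]
  show (i : ℕ) + 1 ≤ finrank ℂ ↥(ann B H ⊓ F ⟨m + ((i : ℕ) + 1) - lam i, hk1⟩)
  omega

theorem stmt4 (m : ℕ) (hm : 1 ≤ m) (V : Type*) [AddCommGroup V] [Module ℂ V]
    [FiniteDimensional ℂ V] (hdim : finrank ℂ V = 2 * m)
    (B : LinearMap.BilinForm ℂ V) (halt : B.IsAlt) (hB : B.Nondegenerate)
    (lam : Fin m → ℕ) (hanti : Antitone lam) (hle : ∀ i, lam i ≤ m)
    (hsym : conjugatePartition m lam = lam)
    (F : Fin (2 * m + 1) → Submodule ℂ V) (hF : IsFullFlag m F)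
    (hiso : annFlag m B F = F) :
    ann B '' SchubertVariety m lam F = SchubertVariety m lam F := by
  ext H
  constructor
  · rintro ⟨H', hH', rfl⟩
    exact schubert_ann_mem m hm V hdim B halt hB lam hanti hle hsym F hF hiso H' hH'
  · intro hH
    exact ⟨ann B H,
      schubert_ann_mem m hm V hdim B halt hB lam hanti hle hsym F hF hiso H hH,
      ann_ann hB halt H⟩
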